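/- Let γ_1,…,γ_n be d×d Hermitian matrices satisfying γ_iγ_j + γ_jγ_i = 2δ_{ij}𝟙 and Tr(γ_i) = 0, with Tr(γ_iγ_j) = d·δ_{ij}. Let a, b ∈ ℝ^n be unit vectors and set A = Σ_k a_k γ_k, B = Σ_k b_k γ_kᵗ. Then A² = 𝟙, B² = 𝟙, and for the maximally entangled state |Φ⁺⟩ = (1/√d) Σ_{i=1}^d |ii⟩ in ℂ^d ⊗ ℂ^d, one has ⟨Φ⁺| A ⊗ B |Φ⁺⟩ = ⟨a, b⟩ (the Euclidean dot product), and ⟨Φ⁺| A ⊗ 𝟙 |Φ⁺⟩ = ⟨Φ⁺| 𝟙 ⊗ B |Φ⁺⟩ = 0. -/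

import Mathlib

open Matrix
open Kronecker
open scoped InnerProductSpace


lemma sq_one_aux {d n : ℕ} (M : Fin n → Matrix (Fin d) (Fin d) ℂ)
    (hC : ∀ i j, M i * M j + M j * M i =
      if i = j then (2:ℂ) • (1 : Matrix (Fin d) (Fin d) ℂ) else 0)
    (c : Fin n → ℝ) (hc : ∑ k, c k ^ 2 = 1) :
    (∑ k, (c k : ℂ) • M k) ^ 2 = 1 := by
  have expand : (∑ k, (c k : ℂ) • M k) ^ 2
      = ∑ k, ∑ l, ((c k : ℂ) * c l) • (M k * M l) := by
    rw [sq, Finset.sum_mul_sum]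
    refine Finset.sum_congr rfl fun k _ => Finset.sum_congr rfl fun l _ => ?_
    rw [Matrix.smul_mul, Matrix.mul_smul, smul_smul]
  have hswap : (∑ k, ∑ l, ((c k : ℂ) * c l) • (M k * M l))
      = ∑ k, ∑ l, ((c k : ℂ) * c l) • (M l * M k) := by
    rw [Finset.sum_comm]
    exact Finset.sum_congr rfl fun k _ => Finset.sum_congr rfl fun l _ => by
      rw [mul_comm ((c k : ℂ))]
  have key : (2:ℂ) • (∑ k, (c k : ℂ) • M k) ^ 2 = (2:ℂ) • (1 : Matrix (Fin d) (Fin d) ℂ) := by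
    rw [two_smul, expand]
    nth_rewrite 2 [hswap]
    rw [← Finset.sum_add_distrib]
    have hrow : ∀ k, ((∑ l, ((c k : ℂ) * c l) • (M k * M l)) + ∑ l, ((c k : ℂ) * c l) • (M l * M k))
        = ((c k : ℂ)^2) • ((2:ℂ) • (1 : Matrix (Fin d) (Fin d) ℂ)) := by
      intro k
      rw [← Finset.sum_add_distrib]
      have hterm : ∀ l, ((c k : ℂ) * c l) • (M k * M l) + ((c k : ℂ) * c l) • (M l * M k)
          = ((c k : ℂ) * c l) • (if k = l then (2:ℂ) • (1 : Matrix (Fin d) (Fin d) ℂ) else 0) := by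
        intro l
        rw [← smul_add, hC k l]
      simp only [hterm]
      simp [Finset.sum_ite_eq, sq, smul_smul, mul_assoc]
    simp only [hrow]
    rw [← Finset.sum_smul]
    have hcc : (∑ k, (c k : ℂ)^2) = 1 := by
      have := congrArg (Complex.ofReal) hc
      push_cast at this
      simpa using this
    rw [hcc, one_smul]
  exact smul_right_injective _ (two_ne_zero) key


lemma inner_phi_aux {d : ℕ} (hd : 1 ≤ d) (X Y : Matrix (Fin d) (Fin d) ℂ)
    (Φ : EuclideanSpace ℂ (Fin d × Fin d))
    (hΦ : ∀ p : Fin d × Fin d, Φ p = if p.1 = p.2 then (1 / Real.sqrt d : ℂ) else 0) :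
    ⟪Φ, Matrix.toEuclideanLin (X ⊗ₖ Y) Φ⟫_ℂ = (X * Yᵀ).trace / d := by
  have hstep : ⟪Φ, Matrix.toEuclideanLin (X ⊗ₖ Y) Φ⟫_ℂ
      = ∑ p : Fin d × Fin d, ∑ q : Fin d × Fin d,
          starRingEnd ℂ (Φ p) * ((X ⊗ₖ Y) p q * Φ q) := by
    simp [PiLp.inner_apply, Matrix.toEuclideanLin_apply, Matrix.mulVec, dotProduct,
      Finset.mul_sum]
    refine Finset.sum_congr rfl fun p _ => ?_
    rw [Finset.sum_mul]
    exact Finset.sum_congr rfl fun q _ => by ring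
  rw [hstep]
  simp only [hΦ, apply_ite (starRingEnd ℂ), map_div₀, _root_.map_one, Complex.conj_ofReal,
    map_zero, Fintype.sum_prod_type, kroneckerMap_apply, ite_mul, mul_ite, zero_mul, mul_zero,
    Finset.sum_ite_eq, Finset.sum_ite_eq', Finset.mem_univ, if_true]
  have hcollapse : ∀ x : Fin d,
      (∑ x_1 : Fin d, ∑ x_2 : Fin d,
        if x = x_1 then 1 / (Real.sqrt d : ℂ) * (X x x_2 * Y x_1 x_2 * (1 / (Real.sqrt d : ℂ))) else 0)
      = ∑ x_2 : Fin d, 1 / (Real.sqrt d : ℂ) * (X x x_2 * Y x x_2 * (1 / (Real.sqrt d : ℂ))) := by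
    intro x
    rw [Finset.sum_comm]
    simp
  simp only [hcollapse, Matrix.trace, Matrix.diag_apply, Matrix.mul_apply,
    Matrix.transpose_apply, Finset.sum_div]
  refine Finset.sum_congr rfl fun i _ => Finset.sum_congr rfl fun j _ => ?_
  have hsd : ((Real.sqrt d : ℂ)) * (Real.sqrt d : ℂ) = (d : ℂ) := by
    norm_cast
    exact Real.mul_self_sqrt (by positivity)
  have h1 : (Real.sqrt d : ℂ) ≠ 0 := by
    intro h
    rw [h, zero_mul] at hsd
    exact (by exact_mod_cast (Nat.one_le_iff_ne_zero.mp hd) : (d:ℂ) ≠ 0) hsd.symm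
  have hd0 : (d : ℂ) ≠ 0 := by exact_mod_cast Nat.one_le_iff_ne_zero.mp hd
  field_simp
  rw [sq, hsd]
  ring

theorem stmt16 (d n : ℕ) (hd : 1 ≤ d)
    (γ : Fin n → Matrix (Fin d) (Fin d) ℂ)
    (hHerm : ∀ i, (γ i).IsHermitian)
    (hCliff : ∀ i j, γ i * γ j + γ j * γ i =
      if i = j then (2 : ℂ) • (1 : Matrix (Fin d) (Fin d) ℂ) else 0)
    (hTr0 : ∀ i, (γ i).trace = 0)
    (hTr : ∀ i j, (γ i * γ j).trace = if i = j then (d : ℂ) else 0)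
    (a b : Fin n → ℝ) (ha : ∑ k, a k ^ 2 = 1) (hb : ∑ k, b k ^ 2 = 1)
    (A B : Matrix (Fin d) (Fin d) ℂ)
    (hA : A = ∑ k, (a k : ℂ) • γ k) (hB : B = ∑ k, (b k : ℂ) • (γ k)ᵀ)
    (Φ : EuclideanSpace ℂ (Fin d × Fin d))
    (hΦ : ∀ p : Fin d × Fin d, Φ p = if p.1 = p.2 then (1 / Real.sqrt d : ℂ) else 0) :
    A ^ 2 = 1 ∧ B ^ 2 = 1 ∧
    ⟪Φ, Matrix.toEuclideanLin (A ⊗ₖ B) Φ⟫_ℂ = ((∑ k, a k * b k : ℝ) : ℂ) ∧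
    ⟪Φ, Matrix.toEuclideanLin (A ⊗ₖ (1 : Matrix (Fin d) (Fin d) ℂ)) Φ⟫_ℂ = 0 ∧
    ⟪Φ, Matrix.toEuclideanLin ((1 : Matrix (Fin d) (Fin d) ℂ) ⊗ₖ B) Φ⟫_ℂ = 0 := by
  have hd0 : (d : ℂ) ≠ 0 := by exact_mod_cast Nat.one_le_iff_ne_zero.mp hd
  have hCliffT : ∀ i j, (γ i)ᵀ * (γ j)ᵀ + (γ j)ᵀ * (γ i)ᵀ =
      if i = j then (2 : ℂ) • (1 : Matrix (Fin d) (Fin d) ℂ) else 0 := by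
    intro i j
    rw [← Matrix.transpose_mul, ← Matrix.transpose_mul, ← Matrix.transpose_add, hCliff j i]
    by_cases h : i = j
    · simp [h]
    · simp [h, Ne.symm h]
  have hBT : Bᵀ = ∑ k, (b k : ℂ) • γ k := by
    rw [hB, Matrix.transpose_sum]
    exact Finset.sum_congr rfl fun k _ => by
      rw [Matrix.transpose_smul, Matrix.transpose_transpose]
  have hA2 : A ^ 2 = 1 := hA ▸ sq_one_aux γ hCliff a ha
  have hB2 : B ^ 2 = 1 := hB ▸ sq_one_aux (fun k => (γ k)ᵀ) hCliffT b hb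
  have htrA : A.trace = 0 := by
    rw [hA, Matrix.trace_sum]
    simp [Matrix.trace_smul, hTr0]
  have htrBT : (Bᵀ).trace = 0 := by
    rw [hBT, Matrix.trace_sum]
    simp [Matrix.trace_smul, hTr0]
  have htrAB : (A * Bᵀ).trace = (d : ℂ) * ∑ k, (a k : ℂ) * b k := by
    rw [hA, hBT, Finset.sum_mul_sum]
    rw [Matrix.trace_sum]
    simp only [Matrix.trace_sum, Matrix.smul_mul, Matrix.mul_smul, smul_smul,
      Matrix.trace_smul, hTr, smul_eq_mul, mul_ite, mul_zero]
    rw [Finset.mul_sum]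
    refine Finset.sum_congr rfl fun k _ => ?_
    simp only [Finset.sum_ite_eq, Finset.mem_univ, if_true]
    ring
  refine ⟨hA2, hB2, ?_, ?_, ?_⟩
  · rw [inner_phi_aux hd A B Φ hΦ, htrAB, mul_comm, mul_div_assoc, div_self hd0, mul_one]
    push_cast
    ring
  · rw [inner_phi_aux hd A 1 Φ hΦ, Matrix.transpose_one, mul_one, htrA, zero_div]
  · rw [inner_phi_aux hd 1 B Φ hΦ, Matrix.one_mul, htrBT, zero_div]
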